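/- Let d be an odd prime and g = ((a₁,b₁),(a₂,b₂)) ∈ ((ZMod d)²)² with b₁ ≠ 0 and b₂ ≠ 0. For i = 1,2 let v^i_λ ∈ ℂ^{ZMod d} be the eigenvector basis of W_{a_i,b_i} given by (v^i_λ)_j := d^{−1/2} ω^{Γ^i_{λ,j}}, Γ^i_{λ,j} := j b_i^{−1} λ − 2^{−1} (j b_i^{−1})(j b_i^{−1} − 1) a_i b_i, and let U_c be the unitary d² × d² matrix (the canonic encoding) determined by U_c (e_λ ⊗ e_k) = v¹_k ⊗ v²_{λ−k} for all λ, k ∈ ZMod d. Then for every error element e = ((x₁,y₁),(x₂,y₂)) ∈ ((ZMod d)²)², setting s₁ := b₁x₁ − a₁y₁, s₂ := b₂x₂ − a₂y₂ and s := s₁ + s₂, there exist t, t' ∈ ZMod d and c ∈ ℂ with |c| = 1 such that U_c† (W_{x₁,y₁} ⊗ W_{x₂,y₂}) U_c = c · (W_{t',−s} ⊗ W_{t,−s₁}). -/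

import Mathlib

open Matrix Complex

noncomputable section

/-- ω = exp(2πi/d). -/
def omga (d : ℕ) : ℂ := Complex.exp (2 * Real.pi * Complex.I / d)

/-- The Weyl operator W_{k,l}: (j,j') entry is ω^{jk} if j' = j + l, else 0. -/
def weyl (d : ℕ) (k l : ZMod d) : Matrix (ZMod d) (ZMod d) ℂ :=
  Matrix.of fun j j' => if j' = j + l then omga d ^ (j * k).val else 0

/-- Γ_{λ,j} = j b⁻¹ λ − 2⁻¹ (j b⁻¹)(j b⁻¹ − 1) a b. -/
def gam (d : ℕ) (a b lam j : ZMod d) : ZMod d :=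
  j * b⁻¹ * lam - 2⁻¹ * (j * b⁻¹) * (j * b⁻¹ - 1) * (a * b)

/-- The eigenvector v_λ of W_{a,b}: (v_λ)_j = d^{−1/2} ω^{Γ_{λ,j}}. -/
def vlam (d : ℕ) (a b lam : ZMod d) : ZMod d → ℂ :=
  fun j => (((Real.sqrt d)⁻¹ : ℝ) : ℂ) * omga d ^ (gam d a b lam j).val

open Kronecker

/-- The canonic encoding U_c for N = 2, determined by U_c(e_λ ⊗ e_k) = v¹_k ⊗ v²_{λ−k}. -/
def ucan (d : ℕ) (a₁ b₁ a₂ b₂ : ZMod d) : Matrix (ZMod d × ZMod d) (ZMod d × ZMod d) ℂ :=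
  Matrix.of fun r c => vlam d a₁ b₁ c.2 r.1 * vlam d a₂ b₂ (c.1 - c.2) r.2

/-! ### Auxiliary material -/

def ee (d : ℕ) (m : ZMod d) : ℂ := omga d ^ m.val

def phi (d : ℕ) (a b x y k : ZMod d) : ZMod d :=
  y * b⁻¹ * k - 2⁻¹ * (a * b) * ((y * b⁻¹) * (y * b⁻¹) - y * b⁻¹)

lemma omga_prim (d : ℕ) [NeZero d] : IsPrimitiveRoot (omga d) d :=
  Complex.isPrimitiveRoot_exp d (NeZero.ne d)

lemma omga_pow_d (d : ℕ) [NeZero d] : omga d ^ d = 1 := (omga_prim d).pow_eq_one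

lemma omga_pow_mod (d : ℕ) [NeZero d] (x : ℕ) : omga d ^ (x % d) = omga d ^ x := by
  conv_rhs => rw [← Nat.div_add_mod x d]
  rw [pow_add, pow_mul, omga_pow_d, one_pow, one_mul]

lemma ee_add (d : ℕ) [NeZero d] (a b : ZMod d) : ee d (a + b) = ee d a * ee d b := by
  rw [ee, ZMod.val_add, omga_pow_mod, pow_add]; rfl

lemma norm_omga (d : ℕ) [NeZero d] : ‖omga d‖ = 1 := by
  have h : (2 * (Real.pi : ℂ) * Complex.I / d) = ((2 * Real.pi / d : ℝ) : ℂ) * Complex.I := by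
    push_cast; ring
  rw [omga, h, Complex.norm_exp_ofReal_mul_I]

lemma norm_ee (d : ℕ) [NeZero d] (m : ZMod d) : ‖ee d m‖ = 1 := by
  rw [ee, norm_pow, norm_omga, one_pow]

lemma ee_zero (d : ℕ) [NeZero d] : ee d 0 = 1 := by simp [ee, ZMod.val_zero]

lemma ee_ne_zero (d : ℕ) [NeZero d] (m : ZMod d) : ee d m ≠ 0 := by
  intro h; have := norm_ee d m; rw [h, norm_zero] at this; norm_num at this

lemma star_ee (d : ℕ) [NeZero d] (m : ZMod d) : star (ee d m) = ee d (-m) := by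
  have h1 : ee d (-m) * ee d m = 1 := by rw [← ee_add]; simp [ee_zero]
  have h2 : star (ee d m) * ee d m = 1 := by
    have := norm_ee d m
    rw [Complex.star_def, ← Complex.normSq_eq_conj_mul_self]
    simp [Complex.normSq_eq_norm_sq, this]
  exact mul_right_cancel₀ (ee_ne_zero d m) (h2.trans h1.symm)

lemma zmod_sum (d : ℕ) [NeZero d] (f : ℕ → ℂ) :
    ∑ j : ZMod d, f j.val = ∑ i ∈ Finset.range d, f i := by
  apply Finset.sum_nbij' (i := fun (j : ZMod d) => j.val) (j := fun i => (i : ZMod d))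
  · intro a _; exact Finset.mem_range.mpr (ZMod.val_lt a)
  · intro a _; exact Finset.mem_univ _
  · intro a _; exact ZMod.natCast_zmod_val a
  · intro a ha; exact ZMod.val_natCast_of_lt (Finset.mem_range.mp ha)
  · intro a _; rfl

lemma sum_ee (d : ℕ) [NeZero d] (c : ZMod d) :
    ∑ j : ZMod d, ee d (j * c) = if c = 0 then (d : ℂ) else 0 := by
  have key : ∀ j : ZMod d, ee d (j * c) = (omga d ^ c.val) ^ j.val := by
    intro j
    rw [ee, ZMod.val_mul, omga_pow_mod, mul_comm j.val, pow_mul]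
  simp_rw [key]
  rw [zmod_sum d (fun n => (omga d ^ c.val) ^ n)]
  split_ifs with hc
  · subst hc; simp [ZMod.val_zero]
  · have hz1 : omga d ^ c.val ≠ 1 := by
      apply (omga_prim d).pow_ne_one_of_pos_of_lt
      · exact (fun h => hc (by rwa [← ZMod.val_eq_zero]))
      · exact ZMod.val_lt c
    rw [geom_sum_eq hz1]
    rw [← pow_mul, mul_comm, pow_mul, omga_pow_d, one_pow, sub_self, zero_div]

lemma two_ne (d : ℕ) (hd : d.Prime) (hodd : Odd d) : (2 : ZMod d) ≠ 0 := by
  intro h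
  have h2 : ((2 : ℕ) : ZMod d) = 0 := by exact_mod_cast h
  have := (ZMod.natCast_eq_zero_iff 2 d).mp h2
  have hd2 : d = 2 := (Nat.prime_dvd_prime_iff_eq hd Nat.prime_two).mp this
  rw [hd2] at hodd
  exact (Nat.not_odd_iff_even.mpr (by decide)) hodd

lemma gam_shift (d : ℕ) (hd : d.Prime) (hodd : Odd d) (a b : ZMod d) (hb : b ≠ 0)
    (x y k q : ZMod d) :
    q * x + gam d a b k (q + y) =
      gam d a b (k + (b * x - a * y)) q + phi d a b x y k := by
  haveI := Fact.mk hd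
  have h2 : (2 : ZMod d) ≠ 0 := two_ne d hd hodd
  have hb1 : b⁻¹ * b = 1 := inv_mul_cancel₀ hb
  have h21 : (2 : ZMod d)⁻¹ * 2 = 1 := inv_mul_cancel₀ h2
  unfold gam phi
  linear_combination (-(q*x) - a*q*y*b⁻¹) * hb1 + (-(a*q*y*b⁻¹*b⁻¹*b)) * h21

lemma gam_sub (d : ℕ) (a b k m q : ZMod d) :
    gam d a b k q - gam d a b m q = q * (b⁻¹ * (k - m)) := by
  unfold gam; ring

lemma vlam_eq (d : ℕ) (a b lam j : ZMod d) :
    vlam d a b lam j = (((Real.sqrt d)⁻¹ : ℝ) : ℂ) * ee d (gam d a b lam j) := rfl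

lemma star_vlam (d : ℕ) [NeZero d] (a b lam j : ZMod d) :
    star (vlam d a b lam j) = (((Real.sqrt d)⁻¹ : ℝ) : ℂ) * ee d (-(gam d a b lam j)) := by
  rw [vlam_eq, star_mul', star_ee, Complex.star_def, Complex.conj_ofReal]

lemma main_sum (d : ℕ) [NeZero d] (hd : d.Prime) (hodd : Odd d)
    (a b : ZMod d) (hb : b ≠ 0) (x y m k : ZMod d) :
    ∑ q : ZMod d, star (vlam d a b m q) * (ee d (q * x) * vlam d a b k (q + y))
      = ee d (phi d a b x y k) * (if m = k + (b * x - a * y) then 1 else 0) := by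
  haveI := Fact.mk hd
  set r : ℂ := (((Real.sqrt d)⁻¹ : ℝ) : ℂ) with hr
  have hrr : r * r * (d : ℂ) = 1 := by
    have hd0 : (d : ℝ) ≠ 0 := Nat.cast_ne_zero.mpr (NeZero.ne d)
    have h5 : ((Real.sqrt d)⁻¹ : ℝ) * (Real.sqrt d)⁻¹ * (d : ℝ) = 1 := by
      rw [← mul_inv, Real.mul_self_sqrt (Nat.cast_nonneg d)]
      field_simp
    have h6 : r * r * (d : ℂ) = ((((Real.sqrt d)⁻¹ : ℝ) * (Real.sqrt d)⁻¹ * (d : ℝ) : ℝ) : ℂ) := by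
      rw [hr]; push_cast; ring
    rw [h6, h5, Complex.ofReal_one]
  set s := b * x - a * y with hs
  have step1 : ∀ q : ZMod d, ee d (q * x) * vlam d a b k (q + y)
      = ee d (phi d a b x y k) * vlam d a b (k + s) q := by
    intro q
    rw [vlam_eq, vlam_eq, mul_left_comm, ← ee_add, hs,
      gam_shift d hd hodd a b hb x y k q, add_comm, ee_add]
    ring
  calc ∑ q : ZMod d, star (vlam d a b m q) * (ee d (q * x) * vlam d a b k (q + y))
      = ∑ q : ZMod d, (ee d (phi d a b x y k) * (r * r)) * ee d (q * (b⁻¹ * ((k + s) - m))) := by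
        apply Finset.sum_congr rfl
        intro q _
        rw [step1 q, star_vlam, vlam_eq]
        have h4 : ee d (-(gam d a b m q)) * ee d (gam d a b (k + s) q)
            = ee d (q * (b⁻¹ * ((k + s) - m))) := by
          rw [← ee_add]
          congr 1
          rw [← gam_sub d a b (k + s) m q]
          ring
        rw [← h4]
        ring
    _ = (ee d (phi d a b x y k) * (r * r)) * ∑ q : ZMod d, ee d (q * (b⁻¹ * ((k + s) - m))) := by
        rw [← Finset.mul_sum]
    _ = ee d (phi d a b x y k) * (if m = k + s then 1 else 0) := by
        rw [sum_ee]
        have hcond : (b⁻¹ * ((k + s) - m) = 0) ↔ (m = k + s) := by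
          constructor
          · intro h
            rcases mul_eq_zero.mp h with h' | h'
            · exact absurd h' (inv_ne_zero hb)
            · exact (sub_eq_zero.mp h').symm
          · intro h; rw [h]; ring
        rw [if_congr hcond rfl rfl]
        split_ifs with h
        · rw [mul_assoc, hrr, mul_one]
        · rw [mul_zero, mul_zero]

/-- in the canonic encoding, the action of any two-copy Weyl error is again of
Weyl form: U_c† (W_{x₁,y₁} ⊗ W_{x₂,y₂}) U_c = c · (W_{t',−s} ⊗ W_{t,−s₁}) for some t, t' and
a unimodular phase c, where s₁ = b₁x₁ − a₁y₁, s₂ = b₂x₂ − a₂y₂, s = s₁ + s₂. -/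
theorem canonic_encoding_error_action
    (d : ℕ) [NeZero d] (hd : d.Prime) (hodd : Odd d)
    (a₁ b₁ a₂ b₂ : ZMod d) (hb₁ : b₁ ≠ 0) (hb₂ : b₂ ≠ 0)
    (x₁ y₁ x₂ y₂ : ZMod d) :
    ∃ (t t' : ZMod d) (c : ℂ), ‖c‖ = 1 ∧
      (ucan d a₁ b₁ a₂ b₂)ᴴ * (weyl d x₁ y₁ ⊗ₖ weyl d x₂ y₂) * ucan d a₁ b₁ a₂ b₂ =
        c • (weyl d t' (-((b₁ * x₁ - a₁ * y₁) + (b₂ * x₂ - a₂ * y₂))) ⊗ₖ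
              weyl d t (-(b₁ * x₁ - a₁ * y₁))) := by
  haveI := Fact.mk hd
  refine ⟨y₁ * b₁⁻¹ - y₂ * b₂⁻¹, y₂ * b₂⁻¹,
    ee d (phi d a₁ b₁ x₁ y₁ 0 + phi d a₂ b₂ x₂ y₂ 0
      - ((b₁ * x₁ - a₁ * y₁) + (b₂ * x₂ - a₂ * y₂)) * (y₂ * b₂⁻¹)
      - (b₁ * x₁ - a₁ * y₁) * (y₁ * b₁⁻¹ - y₂ * b₂⁻¹)),
    norm_ee d _, ?_⟩
  ext i j
  obtain ⟨μ, m⟩ := i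
  obtain ⟨l, k⟩ := j
  have hee : ∀ m : ZMod d, omga d ^ m.val = ee d m := fun _ => rfl
  -- LHS
  have hAU : ∀ q : ZMod d × ZMod d,
      ((weyl d x₁ y₁ ⊗ₖ weyl d x₂ y₂) * ucan d a₁ b₁ a₂ b₂) q (l, k)
        = ee d (q.1 * x₁) * ee d (q.2 * x₂) * ucan d a₁ b₁ a₂ b₂ (q.1 + y₁, q.2 + y₂) (l, k) := by
    intro q
    rw [Matrix.mul_apply]
    rw [Finset.sum_eq_single (q.1 + y₁, q.2 + y₂)]
    · simp [weyl, Matrix.kroneckerMap_apply, hee]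
    · intro p _ hne
      have hor : p.1 ≠ q.1 + y₁ ∨ p.2 ≠ q.2 + y₂ := by
        by_contra hc
        push_neg at hc
        exact hne (Prod.ext hc.1 hc.2)
      rcases hor with h | h <;>
        simp [weyl, Matrix.kroneckerMap_apply, h]
    · intro h
      exact absurd (Finset.mem_univ _) h
  have lhs_eq : ((ucan d a₁ b₁ a₂ b₂)ᴴ * (weyl d x₁ y₁ ⊗ₖ weyl d x₂ y₂) * ucan d a₁ b₁ a₂ b₂)
      (μ, m) (l, k)
      = (∑ q₁ : ZMod d, star (vlam d a₁ b₁ m q₁) * (ee d (q₁ * x₁) * vlam d a₁ b₁ k (q₁ + y₁)))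
        * (∑ q₂ : ZMod d, star (vlam d a₂ b₂ (μ - m) q₂)
            * (ee d (q₂ * x₂) * vlam d a₂ b₂ (l - k) (q₂ + y₂))) := by
    rw [Matrix.mul_assoc, Matrix.mul_apply]
    simp_rw [Matrix.conjTranspose_apply, hAU]
    rw [Fintype.sum_prod_type, Finset.sum_mul_sum]
    apply Finset.sum_congr rfl
    intro q₁ _
    apply Finset.sum_congr rfl
    intro q₂ _
    simp only [ucan, Matrix.of_apply, star_mul']
    ring
  rw [lhs_eq, main_sum d hd hodd a₁ b₁ hb₁ x₁ y₁ m k, main_sum d hd hodd a₂ b₂ hb₂ x₂ y₂ (μ - m) (l - k)]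
  simp only [Matrix.smul_apply, Matrix.kroneckerMap_apply, weyl, Matrix.of_apply, smul_eq_mul, hee]
  by_cases h1 : m = k + (b₁ * x₁ - a₁ * y₁)
  · by_cases h2 : μ = l + ((b₁ * x₁ - a₁ * y₁) + (b₂ * x₂ - a₂ * y₂))
    · subst h1; subst h2
      rw [if_pos rfl,
        if_pos (show l + ((b₁ * x₁ - a₁ * y₁) + (b₂ * x₂ - a₂ * y₂)) - (k + (b₁ * x₁ - a₁ * y₁))
            = (l - k) + (b₂ * x₂ - a₂ * y₂) by ring),
        if_pos (show l = l + ((b₁ * x₁ - a₁ * y₁) + (b₂ * x₂ - a₂ * y₂))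
            + -((b₁ * x₁ - a₁ * y₁) + (b₂ * x₂ - a₂ * y₂)) by ring),
        if_pos (show k = k + (b₁ * x₁ - a₁ * y₁) + -(b₁ * x₁ - a₁ * y₁) by ring)]
      rw [mul_one, mul_one, ← ee_add, ← ee_add, ← ee_add]
      congr 1
      unfold phi
      ring
    · have hL : ¬(μ - m = (l - k) + (b₂ * x₂ - a₂ * y₂)) := by
        intro h; exact h2 (by linear_combination h + h1)
      have hR : ¬(l = μ + -((b₁ * x₁ - a₁ * y₁) + (b₂ * x₂ - a₂ * y₂))) := by
        intro h; exact h2 (by linear_combination -h)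
      rw [if_neg hL, if_neg hR]
      ring
  · have hR : ¬(k = m + -(b₁ * x₁ - a₁ * y₁)) := by
      intro h; exact h1 (by linear_combination -h)
    rw [if_neg h1, if_neg hR]
    ring
end
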